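/- For all (a₁,…,a₆) ∈ ℂ⁶, the three 2×2 minors of the matrix ((z+a₁x, a₂x, y),(a₃y+a₄x, z+a₅y+a₆x, x)) with entries in the polynomial ring ℂ[x,y,z] are linearly independent over ℂ (as degree-2 homogeneous polynomials). -/
import Mathlib


open MvPolynomial

/-- For every `(a₁,…,a₆) ∈ ℂ⁶`, the three 2×2 minors of the matrix
`((z+a₁x, a₂x, y),(a₃y+a₄x, z+a₅y+a₆x, x))` are linearly independent over ℂ. -/
theorem big_cell_minors_linearIndependent (a : Fin 6 → ℂ) :
    letI x : MvPolynomial (Fin 3) ℂ := X 0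
    letI y : MvPolynomial (Fin 3) ℂ := X 1
    letI z : MvPolynomial (Fin 3) ℂ := X 2
    LinearIndependent ℂ
      ![(z + C (a 0) * x) * (z + C (a 4) * y + C (a 5) * x)
          - (C (a 1) * x) * (C (a 2) * y + C (a 3) * x),
        (z + C (a 0) * x) * x - y * (C (a 2) * y + C (a 3) * x),
        (C (a 1) * x) * x - y * (z + C (a 4) * y + C (a 5) * x)] := by
  rw [Fintype.linearIndependent_iff]
  intro g hg
  have key : ∀ p : Fin 3 → ℂ,
      g 0 * ((p 2 + a 0 * p 0) * (p 2 + a 4 * p 1 + a 5 * p 0)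
          - (a 1 * p 0) * (a 2 * p 1 + a 3 * p 0))
      + g 1 * ((p 2 + a 0 * p 0) * p 0 - p 1 * (a 2 * p 1 + a 3 * p 0))
      + g 2 * ((a 1 * p 0) * p 0 - p 1 * (p 2 + a 4 * p 1 + a 5 * p 0)) = 0 := by
    intro p
    have h := congrArg (aeval p : MvPolynomial (Fin 3) ℂ →ₐ[ℂ] ℂ) hg
    simpa [Fin.sum_univ_three, smul_eq_mul, mul_comm] using h
  have h1 := key ![0, 0, 1]
  have h2 := key ![1, 0, -(a 0)]
  have h3 := key ![1, 0, 1 - a 0]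
  have h4 := key ![0, 1, 1 - a 4]
  simp only [Matrix.cons_val_zero, Matrix.cons_val_one, Matrix.head_cons,
    Matrix.cons_val_two, Matrix.tail_cons] at h1 h2 h3 h4
  have e0 : g 0 = 0 := by linear_combination h1
  have e1 : g 1 = 0 := by linear_combination h3 - h2 - (1 - a 0 + a 5) * e0
  have e2 : g 2 = 0 := by linear_combination -h4 + (1 - a 4) * e0 - a 2 * e1
  intro i
  fin_cases i
  exacts [e0, e1, e2]
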